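/- Let f : ℝ → ℝ be of class C⁶ and let x ∈ ℝ. Then, as h → 0 (h ≠ 0), the quantity (1/(48h²))·[−5f(x − 5h/2) + 39f(x − 3h/2) − 34f(x − h/2) − 34f(x + h/2) + 39f(x + 3h/2) − 5f(x + 5h/2)] − f''(x) is O(h⁴); i.e., the six-point stencil centered at x used for the second-derivative correction term of the fifth-order A-WENO flux is a fourth-order accurate approximation of f''(x). -/

import Mathlib

open Filter Topology

open Asymptotics

lemma itd_add {k : ℕ} {u v : ℝ → ℝ} (hu : ContDiff ℝ k u) (hv : ContDiff ℝ k v) (y : ℝ) :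
    iteratedDeriv k (fun t => u t + v t) y = iteratedDeriv k u y + iteratedDeriv k v y := by
  simp only [← iteratedDerivWithin_univ]
  exact iteratedDerivWithin_add (Set.mem_univ y) uniqueDiffOn_univ hu.contDiffWithinAt hv.contDiffWithinAt

lemma itd_cmul {k : ℕ} {u : ℝ → ℝ} (hu : ContDiff ℝ k u) (c y : ℝ) :
    iteratedDeriv k (fun t => c * u t) y = c * iteratedDeriv k u y := by
  simp only [← iteratedDerivWithin_univ]
  exact iteratedDerivWithin_const_mul (Set.mem_univ y) uniqueDiffOn_univ c hu.contDiffWithinAt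

lemma contDiff_term {k : ℕ} {g : ℝ → ℝ} (hg : ContDiff ℝ k g) (x c a : ℝ) :
    ContDiff ℝ k (fun h : ℝ => c * g (x + a * h)) :=
  contDiff_const.mul (hg.comp ((contDiff_const.add (contDiff_const.mul contDiff_id))))

lemma itd_comp {k : ℕ} {g : ℝ → ℝ} (hg : ContDiff ℝ k g) (x c a : ℝ) :
    iteratedDeriv k (fun h => c * g (x + a * h)) 0 = c * (a ^ k * iteratedDeriv k g x) := by
  have h1 : (fun h : ℝ => g (x + a * h)) = fun h : ℝ => (fun z => g (x + z)) (a * h) := rfl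
  have hG : ContDiff ℝ k (fun z => g (x + z)) := hg.comp (contDiff_const.add contDiff_id)
  have hcomp : ContDiff ℝ k (fun h : ℝ => g (x + a * h)) := by
    rw [h1]; exact hG.comp (contDiff_const.mul contDiff_id)
  rw [itd_cmul hcomp c 0, h1, iteratedDeriv_comp_const_mul hG a, iteratedDeriv_comp_const_add]
  norm_num

lemma isBigO_pow_of_itd_zero : ∀ (n : ℕ) (g : ℝ → ℝ), ContDiff ℝ n g →
    (∀ k < n, iteratedDeriv k g 0 = 0) →
    g =O[𝓝 (0:ℝ)] fun h => h ^ n := by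
  intro n
  induction n with
  | zero =>
    intro g hg _
    simpa using (hg.continuous.tendsto 0).isBigO_one ℝ
  | succ n IH =>
    intro g hg h0
    have hg' : ContDiff ℝ ((n:ℕ∞) + 1) g := by exact_mod_cast hg
    have hsplit := contDiff_succ_iff_deriv.mp hg'
    have hdiff : Differentiable ℝ g := hsplit.1
    have hd : ContDiff ℝ n (deriv g) := hsplit.2.2
    have hIH : (deriv g) =O[𝓝 (0:ℝ)] fun h => h ^ n := by
      refine IH (deriv g) hd fun k hk => ?_
      rw [← iteratedDeriv_succ']
      exact h0 (k+1) (by omega)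
    obtain ⟨C, hC0, hCb⟩ := hIH.exists_pos
    rw [isBigOWith_iff] at hCb
    rw [Metric.eventually_nhds_iff] at hCb
    obtain ⟨ε, hε, hball⟩ := hCb
    have hg0 : g 0 = 0 := by simpa using h0 0 (by omega)
    rw [isBigO_iff]
    refine ⟨C, ?_⟩
    rw [Metric.eventually_nhds_iff]
    refine ⟨ε, hε, fun h hh => ?_⟩
    have key : ‖g h - g 0‖ ≤ C * ‖h‖ ^ n * ‖h - 0‖ := by
      apply Convex.norm_image_sub_le_of_norm_hasDerivWithin_le
        (s := segment ℝ 0 h) (f' := deriv g)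
        (fun t _ => ((hdiff t).hasDerivAt).hasDerivWithinAt)
        (fun t ht => ?_) (convex_segment 0 h) (left_mem_segment ℝ 0 h) (right_mem_segment ℝ 0 h)
      have htle : ‖t‖ ≤ ‖h‖ := by
        obtain ⟨u, v, hu, hv, huv, rfl⟩ := ht
        simp only [smul_zero, zero_add, smul_eq_mul, norm_mul, mul_zero]
        calc ‖v‖ * ‖h‖ ≤ 1 * ‖h‖ := by
              apply mul_le_mul_of_nonneg_right _ (norm_nonneg h)
              rw [Real.norm_of_nonneg hv]; linarith
          _ = ‖h‖ := one_mul _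
      have hdist : dist t (0:ℝ) < ε := by
        rw [dist_zero_right]; calc ‖t‖ ≤ ‖h‖ := htle
          _ = dist h 0 := (dist_zero_right h).symm
          _ < ε := hh
      calc ‖deriv g t‖ ≤ C * ‖t ^ n‖ := hball hdist
        _ = C * ‖t‖ ^ n := by rw [norm_pow]
        _ ≤ C * ‖h‖ ^ n := by
            apply mul_le_mul_of_nonneg_left (pow_le_pow_left₀ (norm_nonneg t) htle n) hC0.le
    rw [hg0, sub_zero, sub_zero] at key
    calc ‖g h‖ ≤ C * ‖h‖ ^ n * ‖h‖ := key
      _ = C * ‖h ^ (n+1)‖ := by rw [norm_pow]; ring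

theorem awneo_second_derivative_stencil (f : ℝ → ℝ) (hf : ContDiff ℝ 6 f) (x : ℝ) :
    (fun h : ℝ =>
        (1 / (48 * h ^ 2)) *
            (-5 * f (x - 5 * h / 2) + 39 * f (x - 3 * h / 2) - 34 * f (x - h / 2)
              - 34 * f (x + h / 2) + 39 * f (x + 3 * h / 2) - 5 * f (x + 5 * h / 2))
          - iteratedDeriv 2 f x)
      =O[𝓝[≠] (0 : ℝ)] (fun h : ℝ => h ^ 4) := by
  set D := iteratedDeriv 2 f x with hD
  set g : ℝ → ℝ := fun t => f t + (-(D/2)) * (t - x)^2 with hgdef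
  have hq : ContDiff ℝ 6 (fun t : ℝ => (t - x)^2) := (contDiff_id.sub contDiff_const).pow 2
  have hgC : ContDiff ℝ 6 g := hf.add (contDiff_const.mul hq)
  have hq1 : deriv (fun t : ℝ => (t - x)^2) = fun t => 2 * (t - x) := by
    funext t
    have := (((hasDerivAt_id t).sub_const x).pow 2).deriv
    simpa using this
  have hq2 : iteratedDeriv 2 (fun t : ℝ => (t - x)^2) x = 2 := by
    rw [show (2:ℕ) = 1 + 1 from rfl, iteratedDeriv_succ, iteratedDeriv_one, hq1]
    have : HasDerivAt (fun t : ℝ => 2 * (t - x)) 2 x := by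
      simpa using ((hasDerivAt_id x).sub_const x).const_mul 2
    exact this.deriv
  have hg2 : iteratedDeriv 2 g x = 0 := by
    rw [hgdef, itd_add (hf.of_le (by norm_num)) ((contDiff_const.mul hq).of_le (by norm_num)) x,
      itd_cmul (hq.of_le (by norm_num)) _ x, hq2, ← hD]
    ring
  set φ : ℝ → ℝ := fun h => (-5) * g (x + (-5/2) * h) + 39 * g (x + (-3/2) * h)
      + (-34) * g (x + (-1/2) * h) + (-34) * g (x + (1/2) * h)
      + 39 * g (x + (3/2) * h) + (-5) * g (x + (5/2) * h) with hφdef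
  have hφC : ContDiff ℝ 6 φ := by
    apply ContDiff.add
    apply ContDiff.add
    apply ContDiff.add
    apply ContDiff.add
    apply ContDiff.add
    all_goals exact contDiff_term hgC x _ _
  have hφk : ∀ k : ℕ, k < 6 → iteratedDeriv k φ 0 = 0 := by
    intro k hk
    have hgk : ContDiff ℝ k g := hgC.of_le (by exact_mod_cast hk.le)
    have e1 := contDiff_term hgk x (-5:ℝ) (-5/2)
    have e2 := contDiff_term hgk x (39:ℝ) (-3/2)
    have e3 := contDiff_term hgk x (-34:ℝ) (-1/2)
    have e4 := contDiff_term hgk x (-34:ℝ) (1/2)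
    have e5 := contDiff_term hgk x (39:ℝ) (3/2)
    have e6 := contDiff_term hgk x (-5:ℝ) (5/2)
    rw [hφdef, itd_add ((((e1.add e2).add e3).add e4).add e5) e6 0,
      itd_add (((e1.add e2).add e3).add e4) e5 0,
      itd_add ((e1.add e2).add e3) e4 0, itd_add (e1.add e2) e3 0, itd_add e1 e2 0,
      itd_comp hgk, itd_comp hgk, itd_comp hgk, itd_comp hgk, itd_comp hgk, itd_comp hgk]
    interval_cases k <;> norm_num [hg2] <;> ring
  have hbig : φ =O[𝓝 (0:ℝ)] fun h => h ^ 6 := isBigO_pow_of_itd_zero 6 φ hφC hφk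
  have h1 : φ =O[𝓝[≠] (0:ℝ)] fun h => h ^ 6 := hbig.mono nhdsWithin_le_nhds
  have h2 : (fun h : ℝ => 1/(48*h^2)) =O[𝓝[≠] (0:ℝ)] fun h => (h^2)⁻¹ := by
    have : (fun h : ℝ => 1/(48*h^2)) = fun h : ℝ => (1/48) * (h^2)⁻¹ := by
      funext h; rw [one_div, mul_inv]; ring
    rw [this]
    exact (isBigO_refl (fun h : ℝ => (h^2)⁻¹) _).const_mul_left (1/48)
  have h3 := h1.mul h2
  refine h3.congr' ?_ ?_
  · filter_upwards [self_mem_nhdsWithin] with h hh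
    have hh' : (h : ℝ) ≠ 0 := hh
    simp only [hφdef, hgdef]
    have a1 : x + (-5/2) * h = x - 5 * h / 2 := by ring
    have a2 : x + (-3/2) * h = x - 3 * h / 2 := by ring
    have a3 : x + (-1/2) * h = x - h / 2 := by ring
    have a4 : x + (1/2) * h = x + h / 2 := by ring
    have a5 : x + (3/2) * h = x + 3 * h / 2 := by ring
    have a6 : x + (5/2) * h = x + 5 * h / 2 := by ring
    rw [a1, a2, a3, a4, a5, a6]
    field_simp
    ring
  · filter_upwards [self_mem_nhdsWithin] with h hh
    have hh' : (h : ℝ) ≠ 0 := hh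
    field_simp
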